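/- Let d ≥ 1, let U_1, …, U_d ∈ M_n(ℂ) be pairwise commuting unitary matrices, and let A ∈ M_n(ℂ) be a Hermitian unitary matrix commuting with every U_j. Let γ_1, …, γ_{d+1} ∈ M_{d'}(ℂ) be a selfadjoint Clifford family. Then the Hermitian matrix Ĝ = ∑_{j=1}^d Im(U_j) ⊗ γ_j + (d·1 − ∑_{j=1}^d Re(U_j) − A) ⊗ γ_{d+1} is invertible and Sig(Ĝ) = 0. -/

import Mathlib

open Matrix
open scoped Kronecker Matrix.Norms.L2Operator ComplexOrder

set_option linter.unusedSectionVars false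
set_option maxHeartbeats 1000000

noncomputable section

/-- The "real part" `(A + A*)/2` of a square complex matrix. -/
def mRe {n : ℕ} (A : Matrix (Fin n) (Fin n) ℂ) : Matrix (Fin n) (Fin n) ℂ :=
  (1/2 : ℂ) • (A + Aᴴ)

/-- The "imaginary part" `(A - A*)/(2i)` of a square complex matrix. -/
def mIm {n : ℕ} (A : Matrix (Fin n) (Fin n) ℂ) : Matrix (Fin n) (Fin n) ℂ :=
  (1/(2 * Complex.I) : ℂ) • (A - Aᴴ)

/-- The signature of a Hermitian matrix: number of positive eigenvalues minus the
number of negative eigenvalues, counted with multiplicity (junk value `0` if the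
matrix is not Hermitian). -/
def matSig {m : Type*} [Fintype m] [DecidableEq m] (B : Matrix m m ℂ) : ℤ :=
  if hB : B.IsHermitian then
    ((Finset.univ.filter fun i => 0 < hB.eigenvalues i).card : ℤ) -
    ((Finset.univ.filter fun i => hB.eigenvalues i < 0).card : ℤ)
  else 0

namespace Stmt3Aux
variable {N : Type*} [Fintype N] [DecidableEq N]




lemma kron_conjTranspose {m p : Type*} [Fintype m] [Fintype p]
    (A : Matrix m m ℂ) (B : Matrix p p ℂ) : (A ⊗ₖ B)ᴴ = Aᴴ ⊗ₖ Bᴴ := by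
  ext ⟨i, j⟩ ⟨k, l⟩
  simp [conjTranspose_apply, mul_comm]

lemma sum_kronecker {m p : Type*} [Fintype m] [Fintype p] {ι : Type*} (s : Finset ι)
    (f : ι → Matrix m m ℂ) (C : Matrix p p ℂ) :
    (∑ i ∈ s, f i) ⊗ₖ C = ∑ i ∈ s, (f i) ⊗ₖ C := by
  ext ⟨a, b⟩ ⟨c, e⟩
  simp [Matrix.kroneckerMap_apply, Matrix.sum_apply, Finset.sum_mul]

lemma psd_sum {ι : Type*} (s : Finset ι) (f : ι → Matrix N N ℂ)
    (h : ∀ i ∈ s, (f i).PosSemidef) : (∑ i ∈ s, f i).PosSemidef :=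
  Finset.sum_induction f _ (fun _ _ ha hb => ha.add hb) .zero h

lemma psd_smul_real {M : Matrix N N ℂ} {c : ℝ} (hc : 0 ≤ c) (hM : M.PosSemidef) :
    ((c : ℂ) • M).PosSemidef := by
  refine ⟨?_, fun x => ?_⟩
  · unfold Matrix.IsHermitian
    rw [conjTranspose_smul, hM.1]
    congr 1
    simp
  · have h := mul_nonneg (Complex.zero_le_real.2 hc) (hM.2 x)
    convert h using 1
    simp only [Finsupp.sum, Finset.mul_sum, Matrix.smul_apply, smul_eq_mul]
    exact Finset.sum_congr rfl fun i _ => Finset.sum_congr rfl fun j _ => by ring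

lemma comm_ct {X Y : Matrix N N ℂ} (h : X * Y = Y * X)
    (hY : Y * Yᴴ = 1) (hY' : Yᴴ * Y = 1) : X * Yᴴ = Yᴴ * X := by
  calc X * Yᴴ = Yᴴ * (Y * X) * Yᴴ := by rw [← mul_assoc Yᴴ Y X, hY', one_mul]
  _ = Yᴴ * (X * Y) * Yᴴ := by rw [h]
  _ = Yᴴ * X := by rw [mul_assoc, mul_assoc X, hY, mul_one]





variable {P : Matrix N N ℂ} (hP : P.IsHermitian)

/-- functional calculus for a Hermitian matrix. -/
def hermFC (f : ℝ → ℂ) : Matrix N N ℂ :=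
  (hP.eigenvectorUnitary : Matrix N N ℂ) * diagonal (f ∘ hP.eigenvalues) *
    star (hP.eigenvectorUnitary : Matrix N N ℂ)

lemma unit_mul_star : (hP.eigenvectorUnitary : Matrix N N ℂ) *
    star (hP.eigenvectorUnitary : Matrix N N ℂ) = 1 :=
  Matrix.mem_unitaryGroup_iff.mp hP.eigenvectorUnitary.2

lemma star_mul_unit : star (hP.eigenvectorUnitary : Matrix N N ℂ) *
    (hP.eigenvectorUnitary : Matrix N N ℂ) = 1 :=
  Matrix.mem_unitaryGroup_iff'.mp hP.eigenvectorUnitary.2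

lemma sandwich_mul {V : Matrix N N ℂ} (hsV : star V * V = 1) (B C : Matrix N N ℂ) :
    (V * B * star V) * (V * C * star V) = V * (B * C) * star V := by
  have c1 : ∀ Z : Matrix N N ℂ, star V * (V * Z) = Z := fun Z => by
    rw [← mul_assoc, hsV, one_mul]
  simp only [mul_assoc, c1]

lemma hermFC_mul (f g : ℝ → ℂ) :
    hermFC hP f * hermFC hP g = hermFC hP (fun x => f x * g x) := by
  unfold hermFC
  rw [sandwich_mul (star_mul_unit hP), diagonal_mul_diagonal]
  rfl

lemma hermFC_id : hermFC hP (fun x => (x : ℂ)) = P := by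
  unfold hermFC
  have : ((fun x : ℝ => (x:ℂ)) ∘ hP.eigenvalues) = (RCLike.ofReal ∘ hP.eigenvalues) := by
    funext i; rfl
  rw [this]
  exact hP.spectral_theorem.symm

lemma hermFC_one : hermFC hP (fun _ => (1 : ℂ)) = 1 := by
  unfold hermFC
  have : (diagonal ((fun _ => (1:ℂ)) ∘ hP.eigenvalues)) = 1 := diagonal_one
  rw [this, mul_one, unit_mul_star]

lemma hermFC_congr {f g : ℝ → ℂ} (h : ∀ i, f (hP.eigenvalues i) = g (hP.eigenvalues i)) :
    hermFC hP f = hermFC hP g := by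
  have : (f ∘ hP.eigenvalues) = (g ∘ hP.eigenvalues) := funext h
  rw [hermFC, hermFC, this]

lemma hermFC_conjTranspose (g : ℝ → ℝ) :
    (hermFC hP (fun x => (g x : ℂ)))ᴴ = hermFC hP (fun x => (g x : ℂ)) := by
  unfold hermFC
  simp only [Matrix.star_eq_conjTranspose, conjTranspose_mul, conjTranspose_conjTranspose,
    diagonal_conjTranspose, mul_assoc]
  congr 2
  ext i j
  simp only [Matrix.diagonal_apply, Pi.star_apply, Function.comp_apply]
  split <;> simp [Complex.conj_ofReal]

lemma hermFC_posSemidef {g : ℝ → ℝ} (hg : ∀ x, 0 ≤ g x) :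
    (hermFC hP (fun x => (g x : ℂ))).PosSemidef := by
  unfold hermFC
  have hd : (diagonal ((fun x => (g x : ℂ)) ∘ hP.eigenvalues)).PosSemidef :=
    PosSemidef.diagonal fun i => Complex.zero_le_real.2 (hg _)
  have := hd.mul_mul_conjTranspose_same (hP.eigenvectorUnitary : Matrix N N ℂ)
  rwa [Matrix.star_eq_conjTranspose]

lemma diag_commute_lift {u : N → ℂ} {Y : Matrix N N ℂ} (f : ℂ → ℂ)
    (h : Y * diagonal u = diagonal u * Y) :
    Y * diagonal (f ∘ u) = diagonal (f ∘ u) * Y := by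
  ext i j
  have h' : Y i j * u j = u i * Y i j := by
    have := congrFun (congrFun h i) j
    simpa [mul_diagonal, diagonal_mul] using this
  by_cases hY : Y i j = 0
  · simp [mul_diagonal, diagonal_mul, hY]
  · have : u j = u i := by
      have h'' := h'
      rw [mul_comm (u i) (Y i j)] at h''
      exact mul_left_cancel₀ hY h''
    simp only [mul_diagonal, diagonal_mul, Function.comp_apply, this]
    ring

lemma hermFC_commute {X : Matrix N N ℂ} (h : X * P = P * X) (f : ℝ → ℂ) :
    X * hermFC hP f = hermFC hP f * X := by
  set V : Matrix N N ℂ := (hP.eigenvectorUnitary : Matrix N N ℂ) with hV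
  have hVs : V * star V = 1 := unit_mul_star hP
  have hsV : star V * V = 1 := star_mul_unit hP
  set Y : Matrix N N ℂ := star V * X * V with hY
  have hXY : X = V * Y * star V := by
    rw [hY, ← mul_assoc, ← mul_assoc, hVs, one_mul, mul_assoc, hVs, mul_one]
  set D : Matrix N N ℂ := diagonal (RCLike.ofReal ∘ hP.eigenvalues) with hD
  have c1 : ∀ Z : Matrix N N ℂ, star V * (V * Z) = Z := fun Z => by
    rw [← mul_assoc, hsV, one_mul]
  have c2 : ∀ Z : Matrix N N ℂ, V * (star V * Z) = Z := fun Z => by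
    rw [← mul_assoc, hVs, one_mul]
  have hcomm0 : Y * D = D * Y := by
    have hspec := hP.spectral_theorem
    rw [hspec] at h
    have key := congrArg (fun M => star V * M * V) h
    simp only [← hV, ← hD] at key
    calc Y * D = star V * (X * (V * D * star V)) * V := by
          simp only [hY, mul_assoc, hsV, hVs, mul_one, one_mul, c1, c2]
      _ = star V * ((V * D * star V) * X) * V := key
      _ = D * Y := by
          simp only [hY, mul_assoc, hsV, hVs, mul_one, one_mul, c1, c2]
  have hlift := diag_commute_lift (fun z : ℂ => f z.re) hcomm0
  have heq : ((fun z : ℂ => f z.re) ∘ (RCLike.ofReal ∘ hP.eigenvalues) : N → ℂ) =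
      (f ∘ hP.eigenvalues) := by
    funext i; simp
  rw [heq] at hlift
  unfold hermFC
  rw [← hV, hXY]
  simp only [mul_assoc, c1, c2]
  congr 1
  rw [← mul_assoc, ← mul_assoc, hlift]

lemma posSemidef_mul_of_commute {M M' : Matrix N N ℂ} (hM : M.PosSemidef)
    (hM' : M'.PosSemidef) (h : M * M' = M' * M) : (M * M').PosSemidef := by
  set s : Matrix N N ℂ := hermFC hM.1 (fun x => (Real.sqrt x : ℂ)) with hs
  have hss : s * s = M := by
    rw [hs, hermFC_mul]
    have : hermFC hM.1 (fun x => (Real.sqrt x : ℂ) * (Real.sqrt x : ℂ)) =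
        hermFC hM.1 (fun x => (x : ℂ)) := by
      apply hermFC_congr
      intro i
      rw [← Complex.ofReal_mul, Real.mul_self_sqrt (hM.eigenvalues_nonneg i)]
    rw [this, hermFC_id]
  have hsh : sᴴ = s := hermFC_conjTranspose hM.1 _
  have hsc : M' * s = s * M' := hermFC_commute hM.1 h.symm _
  have key : M * M' = sᴴ * M' * s := by
    calc M * M' = s * (s * M') := by rw [← hss, mul_assoc]
      _ = s * (M' * s) := by rw [← hsc]
      _ = sᴴ * M' * s := by rw [hsh, mul_assoc]
  rw [key]
  exact hM'.conjTranspose_mul_mul_same s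


end Stmt3Aux

section Main
open Stmt3Aux

lemma mRe_herm {n : ℕ} (X : Matrix (Fin n) (Fin n) ℂ) : (mRe X).IsHermitian := by
  unfold Matrix.IsHermitian mRe
  rw [conjTranspose_smul, conjTranspose_add, conjTranspose_conjTranspose]
  rw [add_comm]
  congr 1
  simp

lemma mIm_herm {n : ℕ} (X : Matrix (Fin n) (Fin n) ℂ) : (mIm X).IsHermitian := by
  unfold Matrix.IsHermitian mIm
  rw [conjTranspose_smul, conjTranspose_sub, conjTranspose_conjTranspose]
  have h1 : star (1/(2 * Complex.I)) = -(1/(2 * Complex.I)) := by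
    simp [Complex.star_def, div_eq_mul_inv]
  rw [h1, neg_smul, ← smul_neg, neg_sub]

lemma mImSq {n : ℕ} {X : Matrix (Fin n) (Fin n) ℂ} (h1 : X * Xᴴ = 1) (h2 : Xᴴ * X = 1) :
    mIm X * mIm X + mRe X * mRe X = 1 := by
  unfold mIm mRe
  rw [smul_mul_smul_comm, smul_mul_smul_comm]
  have e1 : (X - Xᴴ) * (X - Xᴴ) = X*X + Xᴴ*Xᴴ - 1 - 1 := by
    have : (X - Xᴴ) * (X - Xᴴ) = X*X - X*Xᴴ - Xᴴ*X + Xᴴ*Xᴴ := by noncomm_ring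
    rw [this, h1, h2]; abel
  have e2 : (X + Xᴴ) * (X + Xᴴ) = X*X + Xᴴ*Xᴴ + 1 + 1 := by
    have : (X + Xᴴ) * (X + Xᴴ) = X*X + X*Xᴴ + Xᴴ*X + Xᴴ*Xᴴ := by noncomm_ring
    rw [this, h1, h2]; abel
  rw [e1, e2]
  have c1 : (1/(2 * Complex.I)) * (1/(2 * Complex.I)) = -(1/4 : ℂ) := by
    rw [div_mul_div_comm, mul_mul_mul_comm, Complex.I_mul_I]
    norm_num
  have c2 : (1/2 : ℂ) * (1/2 : ℂ) = (1/4 : ℂ) := by norm_num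
  rw [c1, c2]
  module


lemma one_sub_mRe_psd {n : ℕ} {X : Matrix (Fin n) (Fin n) ℂ} (h1 : X * Xᴴ = 1) :
    (1 - mRe X).PosSemidef := by
  have e : (1 - X) * (1 - X)ᴴ = (2:ℂ) • (1 : Matrix (Fin n) (Fin n) ℂ) - (X + Xᴴ) := by
    calc (1 - X) * (1 - X)ᴴ = (1 - X) * (1 - Xᴴ) := by
          rw [conjTranspose_sub, conjTranspose_one]
      _ = 1 - Xᴴ - X + X * Xᴴ := by noncomm_ring
      _ = (2:ℂ) • (1 : Matrix (Fin n) (Fin n) ℂ) - (X + Xᴴ) := by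
          rw [h1, two_smul]; abel
  have key : 1 - mRe X = ((1/2 : ℝ) : ℂ) • ((1 - X) * (1 - X)ᴴ) := by
    rw [e]
    unfold mRe
    have hc : ((1/2 : ℝ) : ℂ) = (1/2 : ℂ) := by norm_num
    rw [hc]
    module
  rw [key]
  exact Stmt3Aux.psd_smul_real (by norm_num) (posSemidef_self_mul_conjTranspose _)


/-- for pairwise commuting unitaries `U_1, …, U_d`, a Hermitian unitary `A`
commuting with every `U_j`, and a selfadjoint Clifford family `γ_1, …, γ_{d+1}`, the
Hermitian matrix `Ĝ = ∑ Im(U_j) ⊗ γ_j + (d·1 - ∑ Re(U_j) - A) ⊗ γ_{d+1}` is invertible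
and `Sig(Ĝ) = 0`. -/
theorem stmt3 {n d' : ℕ} (d : ℕ) (hd : 1 ≤ d)
    (U : Fin d → Matrix (Fin n) (Fin n) ℂ)
    (hU : ∀ j, U j * (U j)ᴴ = 1 ∧ (U j)ᴴ * U j = 1)
    (hcomm : ∀ i j, U i * U j = U j * U i)
    (A : Matrix (Fin n) (Fin n) ℂ)
    (hAherm : A.IsHermitian)
    (hAunit : A * Aᴴ = 1 ∧ Aᴴ * A = 1)
    (hAcomm : ∀ j, A * U j = U j * A)
    (γ : Fin (d+1) → Matrix (Fin d') (Fin d') ℂ)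
    (hγherm : ∀ k, (γ k).IsHermitian)
    (hγcliff : ∀ k l, γ k * γ l + γ l * γ k = (if k = l then (2:ℂ) else 0) • 1)
    (Ghat : Matrix (Fin n × Fin d') (Fin n × Fin d') ℂ)
    (hGhat : Ghat = (∑ j : Fin d, mIm (U j) ⊗ₖ γ j.castSucc) +
      (((d : ℂ) • (1 : Matrix (Fin n) (Fin n) ℂ) - (∑ j : Fin d, mRe (U j)) - A) ⊗ₖ
        γ (Fin.last d))) :
    Ghat.IsHermitian ∧ IsUnit Ghat ∧ matSig Ghat = 0 := by
  have hAH : Aᴴ = A := hAherm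
  have hA2 : A * A = 1 := by have := hAunit.2; rwa [hAH] at this
  set Hm : Matrix (Fin n) (Fin n) ℂ := (d:ℂ) • 1 - (∑ j, mRe (U j)) - A with hHm
  set B : Fin (d+1) → Matrix (Fin n) (Fin n) ℂ :=
    fun k => Fin.lastCases Hm (fun j => mIm (U j)) k with hBdef
  have hBcast : ∀ j : Fin d, B j.castSucc = mIm (U j) := fun j => by
    simp [hBdef]
  have hBlast : B (Fin.last d) = Hm := by simp [hBdef]
  have hGB : Ghat = ∑ k, B k ⊗ₖ γ k := by
    rw [hGhat, Fin.sum_univ_castSucc, hBlast]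
    congr 1
    exact Finset.sum_congr rfl fun j _ => by rw [hBcast]
  -- commutation atoms
  have hcomm2 : ∀ i j, U i * (U j)ᴴ = (U j)ᴴ * U i :=
    fun i j => Stmt3Aux.comm_ct (hcomm i j) (hU j).1 (hU j).2
  have hcomm3 : ∀ i j, (U i)ᴴ * (U j)ᴴ = (U j)ᴴ * (U i)ᴴ := fun i j => by
    have := congrArg conjTranspose (hcomm j i)
    simpa [conjTranspose_mul] using this
  have hAU2 : ∀ j, A * (U j)ᴴ = (U j)ᴴ * A :=
    fun j => Stmt3Aux.comm_ct (hAcomm j) (hU j).1 (hU j).2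
  have hmain : ∀ i j, Commute (mIm (U i)) (mIm (U j)) ∧ Commute (mIm (U i)) (mRe (U j)) ∧
      Commute (mRe (U i)) (mRe (U j)) := by
    intro i j
    have cuu : Commute (U i) (U j) := hcomm i j
    have cus : Commute (U i) ((U j)ᴴ) := hcomm2 i j
    have csu : Commute ((U i)ᴴ) (U j) := (Commute.symm (hcomm2 j i : Commute (U j) ((U i)ᴴ)))
    have css : Commute ((U i)ᴴ) ((U j)ᴴ) := hcomm3 i j
    have hsub : Commute (U i - (U i)ᴴ) (U j - (U j)ᴴ) :=
      (cuu.sub_right cus).sub_left (csu.sub_right css)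
    have hsum : Commute (U i + (U i)ᴴ) (U j + (U j)ᴴ) :=
      (cuu.add_right cus).add_left (csu.add_right css)
    have hsubsum : Commute (U i - (U i)ᴴ) (U j + (U j)ᴴ) :=
      (cuu.add_right cus).sub_left (csu.add_right css)
    unfold mIm mRe
    exact ⟨(hsub.smul_left _).smul_right _, (hsubsum.smul_left _).smul_right _,
      (hsum.smul_left _).smul_right _⟩
  have hAmain : ∀ j, Commute A (mIm (U j)) ∧ Commute A (mRe (U j)) := by
    intro j
    have cau : Commute A (U j) := hAcomm j
    have cas : Commute A ((U j)ᴴ) := hAU2 j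
    unfold mIm mRe
    exact ⟨(cau.sub_right cas).smul_right _, (cau.add_right cas).smul_right _⟩
  -- commute with Hm
  have hHmIm : ∀ i, Commute (mIm (U i)) Hm := by
    intro i
    rw [hHm]
    exact (((Commute.one_right _).smul_right _).sub_right
      (Commute.sum_right _ _ _ fun j _ => (hmain i j).2.1)).sub_right ((hAmain i).1).symm
  have hBcomm : ∀ k l, Commute (B k) (B l) := by
    intro k l
    induction k using Fin.lastCases with
    | last =>
      induction l using Fin.lastCases with
      | last => exact Commute.refl _
      | cast l => rw [hBcast, hBlast]; exact (hHmIm l).symm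
    | cast k =>
      induction l using Fin.lastCases with
      | last => rw [hBcast, hBlast]; exact hHmIm k
      | cast l => rw [hBcast, hBcast]; exact (hmain k l).1
  have hBherm : ∀ k, (B k).IsHermitian := by
    intro k
    induction k using Fin.lastCases with
    | last =>
      rw [hBlast, hHm]
      refine Matrix.IsHermitian.sub (Matrix.IsHermitian.sub ?_ ?_) hAherm
      · unfold Matrix.IsHermitian
        rw [conjTranspose_smul, conjTranspose_one]
        congr 1
        simp
      · unfold Matrix.IsHermitian
        rw [conjTranspose_sum]
        exact Finset.sum_congr rfl fun j _ => mRe_herm (U j)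
    | cast k => rw [hBcast]; exact mIm_herm (U k)
  have hGherm : Ghat.IsHermitian := by
    rw [hGB]
    unfold Matrix.IsHermitian
    rw [conjTranspose_sum]
    refine Finset.sum_congr rfl fun k _ => ?_
    rw [Stmt3Aux.kron_conjTranspose, hBherm k, hγherm k]
  -- the square
  have hγsq : ∀ l, γ l * γ l = 1 := by
    intro l
    have h := hγcliff l l
    rw [if_pos rfl] at h
    have h2 : (2:ℂ) • (γ l * γ l) = (2:ℂ) • (1 : Matrix (Fin d') (Fin d') ℂ) := by
      rw [two_smul ℂ (γ l * γ l)]; exact h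
    exact smul_right_injective _ two_ne_zero h2
  set P : Matrix (Fin n) (Fin n) ℂ := ∑ k, B k * B k with hPdef
  have hsq : Ghat * Ghat = P ⊗ₖ 1 := by
    have expand : Ghat * Ghat = ∑ k, ∑ l, (B k * B l) ⊗ₖ (γ k * γ l) := by
      rw [hGB, Finset.sum_mul_sum]
      exact Finset.sum_congr rfl fun k _ => Finset.sum_congr rfl fun l _ =>
        (mul_kronecker_mul _ _ _ _).symm
    have expand2 : Ghat * Ghat = ∑ k, ∑ l, (B k * B l) ⊗ₖ (γ l * γ k) := by
      rw [expand, Finset.sum_comm]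
      exact Finset.sum_congr rfl fun k _ => Finset.sum_congr rfl fun l _ => by
        rw [hBcomm l k]
    have h2 : Ghat * Ghat + Ghat * Ghat = ∑ k, ∑ l, (B k * B l) ⊗ₖ (γ k * γ l + γ l * γ k) := by
      calc Ghat * Ghat + Ghat * Ghat
          = (∑ k, ∑ l, (B k * B l) ⊗ₖ (γ k * γ l)) +
            (∑ k, ∑ l, (B k * B l) ⊗ₖ (γ l * γ k)) := by rw [← expand, ← expand2]
        _ = ∑ k, ((∑ l, (B k * B l) ⊗ₖ (γ k * γ l)) + (∑ l, (B k * B l) ⊗ₖ (γ l * γ k))) := by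
            rw [← Finset.sum_add_distrib]
        _ = ∑ k, ∑ l, (B k * B l) ⊗ₖ (γ k * γ l + γ l * γ k) := by
            refine Finset.sum_congr rfl fun k _ => ?_
            rw [← Finset.sum_add_distrib]
            exact Finset.sum_congr rfl fun l _ => (kronecker_add _ _ _).symm
    have h3 : Ghat * Ghat + Ghat * Ghat =
        ∑ k, (B k * B k) ⊗ₖ ((2:ℂ) • (1 : Matrix (Fin d') (Fin d') ℂ)) := by
      rw [h2]
      refine Finset.sum_congr rfl fun k _ => ?_
      have hterm : ∀ l, (B k * B l) ⊗ₖ (γ k * γ l + γ l * γ k) =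
          if k = l then (B k * B k) ⊗ₖ ((2:ℂ) • (1 : Matrix (Fin d') (Fin d') ℂ)) else 0 := by
        intro l
        rw [hγcliff k l]
        by_cases h : k = l
        · subst h; rw [if_pos rfl, if_pos rfl]
        · rw [if_neg h, if_neg h, zero_smul, kronecker_zero]
      rw [Finset.sum_congr rfl fun l _ => hterm l, Finset.sum_ite_eq, if_pos (Finset.mem_univ k)]
    have h4 : ∑ k, (B k * B k) ⊗ₖ ((2:ℂ) • (1 : Matrix (Fin d') (Fin d') ℂ)) =
        (2:ℂ) • (P ⊗ₖ (1 : Matrix (Fin d') (Fin d') ℂ)) := by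
      rw [hPdef, Stmt3Aux.sum_kronecker, Finset.smul_sum]
      exact Finset.sum_congr rfl fun k _ => by rw [kronecker_smul]
    have h5 : (2:ℂ) • (Ghat * Ghat) = (2:ℂ) • (P ⊗ₖ (1 : Matrix (Fin d') (Fin d') ℂ)) := by
      rw [two_smul ℂ (Ghat * Ghat), h3, h4]
    exact smul_right_injective _ two_ne_zero h5
  have hPcommB : ∀ k, Commute (B k) P :=
    fun k => Commute.sum_right _ _ _ fun l _ => (hBcomm k l).mul_right (hBcomm k l)
  have hPherm : P.IsHermitian := by
    unfold Matrix.IsHermitian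
    rw [conjTranspose_sum]
    refine Finset.sum_congr rfl fun k _ => ?_
    rw [conjTranspose_mul, hBherm k]
  -- positivity
  set D1 : Matrix (Fin n) (Fin n) ℂ := (d:ℂ) • 1 with hD1
  set T : Matrix (Fin n) (Fin n) ℂ := ∑ j, (1 - mRe (U j)) with hT
  have hTD : T = D1 - ∑ j, mRe (U j) := by
    rw [hT, Finset.sum_sub_distrib, hD1]
    congr 1
    rw [Finset.sum_const, Finset.card_univ, Fintype.card_fin, Nat.cast_smul_eq_nsmul]
  have hHT : Hm = T - A := by rw [hHm, hTD]
  have hTm_psd : ∀ j : Fin d, (1 - mRe (U j)).PosSemidef := fun j => one_sub_mRe_psd (hU j).1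
  have hA1_psd : (1 - A).PosSemidef := by
    have e : (1 - A) * (1 - A)ᴴ = (2:ℂ) • (1 - A) := by
      rw [conjTranspose_sub, conjTranspose_one, hAH]
      calc (1 - A) * (1 - A) = 1 - A - A + A * A := by noncomm_ring
        _ = (2:ℂ) • (1 - A) := by rw [hA2, two_smul]; abel
    have key : (1 : Matrix (Fin n) (Fin n) ℂ) - A = ((1/2 : ℝ) : ℂ) • ((1 - A) * (1 - A)ᴴ) := by
      rw [e, smul_smul]
      norm_num
    rw [key]
    exact Stmt3Aux.psd_smul_real (by norm_num) (posSemidef_self_mul_conjTranspose _)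
  have hTpsd : T.PosSemidef := by
    rw [hT]; exact Stmt3Aux.psd_sum _ _ fun j _ => hTm_psd j
  have hTmTm : ∀ i j : Fin d, Commute (1 - mRe (U i)) (1 - mRe (U j)) := by
    intro i j
    have c2 : Commute (mRe (U i)) (1 - mRe (U j)) :=
      (Commute.one_right _).sub_right (hmain i j).2.2
    exact (Commute.one_left _).sub_left c2
  have hTmA1 : ∀ j : Fin d, Commute (1 - mRe (U j)) (1 - A) := by
    intro j
    have c2 : Commute (mRe (U j)) (1 - A) :=
      (Commute.one_right _).sub_right ((hAmain j).2).symm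
    exact (Commute.one_left _).sub_left c2
  have part1 : ∀ j : Fin d, ((1 - mRe (U j)) * (T - (1 - mRe (U j)))).PosSemidef := by
    intro j
    have hsplit : T - (1 - mRe (U j)) = ∑ l ∈ Finset.univ.erase j, (1 - mRe (U l)) := by
      have h := Finset.sum_erase_add Finset.univ (fun l => 1 - mRe (U l)) (Finset.mem_univ j)
      rw [← hT] at h
      exact (eq_sub_of_add_eq h).symm
    rw [hsplit]
    refine Stmt3Aux.posSemidef_mul_of_commute (hTm_psd j)
      (Stmt3Aux.psd_sum _ _ fun l _ => hTm_psd l) ?_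
    exact Commute.sum_right _ _ _ fun l _ => hTmTm j l
  have hTA1comm : Commute T (1 - A) := by
    rw [hT]; exact Commute.sum_left _ _ _ fun j _ => hTmA1 j
  have part2 : (T * (1 - A)).PosSemidef :=
    Stmt3Aux.posSemidef_mul_of_commute hTpsd hA1_psd hTA1comm
  have part3 : ((1 - A) * T).PosSemidef := by rw [← hTA1comm]; exact part2
  have hQpsd : ((∑ j, (1 - mRe (U j)) * (T - (1 - mRe (U j)))) +
      (T * (1 - A) + (1 - A) * T)).PosSemidef :=
    (Stmt3Aux.psd_sum _ _ fun j _ => part1 j).add (part2.add part3)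
  have hident : P = 1 + ((∑ j, (1 - mRe (U j)) * (T - (1 - mRe (U j)))) +
      (T * (1 - A) + (1 - A) * T)) := by
    have hone : (∑ _j : Fin d, (1 : Matrix (Fin n) (Fin n) ℂ)) = D1 := by
      rw [Finset.sum_const, Finset.card_univ, Fintype.card_fin, hD1, Nat.cast_smul_eq_nsmul]
    have hP2 : P = (∑ j, mIm (U j) * mIm (U j)) + Hm * Hm := by
      rw [hPdef, Fin.sum_univ_castSucc, hBlast]
      congr 1
      exact Finset.sum_congr rfl fun j _ => by rw [hBcast]
    have hImj : ∀ j, mIm (U j) * mIm (U j) = 1 - mRe (U j) * mRe (U j) := fun j =>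
      eq_sub_of_add_eq (mImSq (hU j).1 (hU j).2)
    have hsum1 : (∑ j, mIm (U j) * mIm (U j)) = D1 - ∑ j, mRe (U j) * mRe (U j) := by
      calc (∑ j, mIm (U j) * mIm (U j))
          = ∑ j, ((1 : Matrix (Fin n) (Fin n) ℂ) - mRe (U j) * mRe (U j)) :=
            Finset.sum_congr rfl fun j _ => hImj j
        _ = D1 - ∑ j, mRe (U j) * mRe (U j) := by rw [Finset.sum_sub_distrib, hone]
    have hHm2 : Hm * Hm = T*T - T*A - A*T + 1 := by
      rw [hHT]
      calc (T-A)*(T-A) = T*T - T*A - A*T + A*A := by noncomm_ring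
        _ = T*T - T*A - A*T + 1 := by rw [hA2]
    have hb : (∑ j, (1 - mRe (U j)) * (T - (1 - mRe (U j)))) =
        T*T - (∑ j, (1 - mRe (U j)) * (1 - mRe (U j))) := by
      calc (∑ j, (1 - mRe (U j)) * (T - (1 - mRe (U j))))
          = ∑ j, ((1 - mRe (U j)) * T - (1 - mRe (U j)) * (1 - mRe (U j))) :=
            Finset.sum_congr rfl fun j _ => mul_sub _ _ _
        _ = (∑ j, ((1 : Matrix (Fin n) (Fin n) ℂ) - mRe (U j))) * T -
            ∑ j, (1 - mRe (U j)) * (1 - mRe (U j)) := by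
            rw [Finset.sum_sub_distrib, Finset.sum_mul]
        _ = T*T - ∑ j, (1 - mRe (U j)) * (1 - mRe (U j)) := by rw [← hT]
    have hc : (∑ j, (1 - mRe (U j)) * (1 - mRe (U j))) =
        D1 - (∑ j, mRe (U j)) - (∑ j, mRe (U j)) + ∑ j, mRe (U j) * mRe (U j) := by
      calc (∑ j, (1 - mRe (U j)) * (1 - mRe (U j)))
          = ∑ j, ((1 : Matrix (Fin n) (Fin n) ℂ) - mRe (U j) - mRe (U j) +
              mRe (U j) * mRe (U j)) := Finset.sum_congr rfl fun j _ => by noncomm_ring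
        _ = D1 - (∑ j, mRe (U j)) - (∑ j, mRe (U j)) + ∑ j, mRe (U j) * mRe (U j) := by
            rw [Finset.sum_add_distrib, Finset.sum_sub_distrib, Finset.sum_sub_distrib, hone]
    have hd1 : T * (1 - A) = T - T*A := by rw [mul_sub, mul_one]
    have hd2 : (1 - A) * T = T - A*T := by rw [sub_mul, one_mul]
    rw [hP2, hsum1, hHm2, hb, hc, hd1, hd2, hTD]
    abel
  have hPkey : P.PosDef := by
    rw [hident]
    exact Matrix.PosDef.one.add_posSemidef hQpsd
  -- inverse square root
  set R : Matrix (Fin n) (Fin n) ℂ :=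
    Stmt3Aux.hermFC hPherm (fun x => (((Real.sqrt x)⁻¹ : ℝ) : ℂ)) with hRdef
  have hRB : ∀ k, B k * R = R * B k :=
    fun k => Stmt3Aux.hermFC_commute hPherm (hPcommB k) _
  have hRherm : Rᴴ = R := Stmt3Aux.hermFC_conjTranspose hPherm _
  have hRpsd : R.PosSemidef :=
    Stmt3Aux.hermFC_posSemidef hPherm (g := fun x => (Real.sqrt x)⁻¹)
      (fun x => inv_nonneg.2 (Real.sqrt_nonneg x))
  have hPRR : P * (R * R) = 1 := by
    have hx : ∀ i, (hPherm.eigenvalues i : ℂ) *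
        ((((Real.sqrt (hPherm.eigenvalues i))⁻¹ : ℝ) : ℂ) *
          (((Real.sqrt (hPherm.eigenvalues i))⁻¹ : ℝ) : ℂ)) = 1 := by
      intro i
      have hpos : 0 < hPherm.eigenvalues i := hPkey.eigenvalues_pos i
      rw [← Complex.ofReal_mul, ← Complex.ofReal_mul]
      rw [← Real.sqrt_inv, Real.mul_self_sqrt (by positivity)]
      rw [← Complex.ofReal_one]
      congr 1
      field_simp
    calc P * (R * R)
        = Stmt3Aux.hermFC hPherm (fun x => (x : ℂ)) * (R * R) := by
          rw [Stmt3Aux.hermFC_id]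
      _ = Stmt3Aux.hermFC hPherm (fun x => (x : ℂ) *
            ((((Real.sqrt x)⁻¹ : ℝ) : ℂ) * (((Real.sqrt x)⁻¹ : ℝ) : ℂ))) := by
          rw [hRdef, Stmt3Aux.hermFC_mul, Stmt3Aux.hermFC_mul]
      _ = Stmt3Aux.hermFC hPherm (fun _ => (1 : ℂ)) := Stmt3Aux.hermFC_congr hPherm hx
      _ = 1 := Stmt3Aux.hermFC_one hPherm
  -- invertibility
  have hrightinv : Ghat * (Ghat * ((R * R) ⊗ₖ (1 : Matrix (Fin d') (Fin d') ℂ))) = 1 := by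
    rw [← mul_assoc, hsq, ← mul_kronecker_mul, one_mul, hPRR, Matrix.one_kronecker_one]
  have hunit : IsUnit Ghat :=
    @isUnit_of_invertible _ _ Ghat (invertibleOfRightInverse _ _ hrightinv)
  -- the sign matrix
  set F : Matrix (Fin n × Fin d') (Fin n × Fin d') ℂ :=
    Ghat * (R ⊗ₖ (1 : Matrix (Fin d') (Fin d') ℂ)) with hFdef
  have hRkG : Ghat * (R ⊗ₖ (1 : Matrix (Fin d') (Fin d') ℂ)) =
      (R ⊗ₖ (1 : Matrix (Fin d') (Fin d') ℂ)) * Ghat := by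
    rw [hGB, Finset.sum_mul, Finset.mul_sum]
    refine Finset.sum_congr rfl fun k _ => ?_
    rw [← mul_kronecker_mul, ← mul_kronecker_mul, mul_one, one_mul, hRB k]
  have hFG : F * Ghat = Ghat * F := by
    rw [hFdef, mul_assoc, ← hRkG, ← mul_assoc]
  have hF2 : F * F = 1 := by
    calc F * F = Ghat * ((R ⊗ₖ (1 : Matrix (Fin d') (Fin d') ℂ)) * Ghat *
        (R ⊗ₖ (1 : Matrix (Fin d') (Fin d') ℂ))) := by rw [hFdef]; noncomm_ring
      _ = (Ghat * Ghat) * ((R ⊗ₖ (1 : Matrix (Fin d') (Fin d') ℂ)) *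
          (R ⊗ₖ (1 : Matrix (Fin d') (Fin d') ℂ))) := by rw [← hRkG]; noncomm_ring
      _ = (P * (R * R)) ⊗ₖ ((1 : Matrix (Fin d') (Fin d') ℂ) * (1 * 1)) := by
          rw [hsq, ← mul_kronecker_mul, ← mul_kronecker_mul]
      _ = 1 := by rw [hPRR, one_mul, one_mul, Matrix.one_kronecker_one]
  have hFherm : Fᴴ = F := by
    rw [hFdef, conjTranspose_mul, Stmt3Aux.kron_conjTranspose, conjTranspose_one, hRherm,
      hGherm, ← hRkG]
  have htrγ : ∀ k, Matrix.trace (γ k) = 0 := by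
    intro k
    have : Nontrivial (Fin (d+1)) := by
      apply Fin.nontrivial_iff_two_le.mpr
      omega
    obtain ⟨l, hl⟩ := exists_ne k
    have hkl : γ k * γ l + γ l * γ k = 0 := by
      have h := hγcliff k l
      rw [if_neg (Ne.symm hl), zero_smul] at h
      exact h
    have h1 : γ l * (γ k * γ l) = - γ k := by
      have : γ k * γ l = - (γ l * γ k) := by
        rw [eq_neg_iff_add_eq_zero]; exact hkl
      rw [this, mul_neg, ← mul_assoc, hγsq l, one_mul]
    have h2 : Matrix.trace (γ l * (γ k * γ l)) = Matrix.trace (γ k) := by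
      rw [← mul_assoc, Matrix.trace_mul_comm, ← mul_assoc, hγsq l, one_mul]
    rw [h1, Matrix.trace_neg] at h2
    have h3 : (2:ℂ) * Matrix.trace (γ k) = 0 := by linear_combination - h2
    exact (mul_eq_zero.mp h3).resolve_left two_ne_zero
  have htrF : Matrix.trace F = 0 := by
    have hFsum : F = ∑ k, (B k * R) ⊗ₖ γ k := by
      rw [hFdef, hGB, Finset.sum_mul]
      exact Finset.sum_congr rfl fun k _ => by rw [← mul_kronecker_mul, mul_one]
    rw [hFsum, Matrix.trace_sum]
    refine Finset.sum_eq_zero fun k _ => ?_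
    rw [Matrix.trace_kronecker, htrγ k, mul_zero]
  -- spectral analysis of Ghat
  refine ⟨hGherm, hunit, ?_⟩
  set μ : Fin n × Fin d' → ℝ := hGherm.eigenvalues with hμ
  set W : Matrix (Fin n × Fin d') (Fin n × Fin d') ℂ :=
    (hGherm.eigenvectorUnitary : Matrix (Fin n × Fin d') (Fin n × Fin d') ℂ) with hW
  have hWs : W * star W = 1 := Stmt3Aux.unit_mul_star hGherm
  have hsW : star W * W = 1 := Stmt3Aux.star_mul_unit hGherm
  have hcoe : (RCLike.ofReal ∘ μ : (Fin n × Fin d') → ℂ) = fun i => ((μ i : ℝ) : ℂ) :=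
    funext fun i => rfl
  set Dμ : Matrix (Fin n × Fin d') (Fin n × Fin d') ℂ :=
    diagonal (fun i => ((μ i : ℝ) : ℂ)) with hDμ
  have hGspec : Ghat = W * Dμ * star W := by
    rw [hDμ, ← hcoe]
    exact hGherm.spectral_theorem
  have hDiag : star W * Ghat * W = Dμ := by
    rw [hDμ, ← hcoe]
    have := hGherm.conjStarAlgAut_star_eigenvectorUnitary
    rw [Unitary.conjStarAlgAut_apply, Unitary.coe_star, star_star] at this
    exact this
  set F' : Matrix (Fin n × Fin d') (Fin n × Fin d') ℂ := star W * F * W with hF'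
  have c1 : ∀ Z : Matrix (Fin n × Fin d') (Fin n × Fin d') ℂ, star W * (W * Z) = Z := fun Z => by
    rw [← mul_assoc, hsW, one_mul]
  have c2 : ∀ Z : Matrix (Fin n × Fin d') (Fin n × Fin d') ℂ, W * (star W * Z) = Z := fun Z => by
    rw [← mul_assoc, hWs, one_mul]
  have hF'2 : F' * F' = 1 := by
    have e : F' * F' = star W * (F * (F * W)) := by rw [hF']; simp only [mul_assoc, c1, c2]
    rw [e, ← mul_assoc F F W, hF2, one_mul]
    exact hsW
  have hcommD : F' * Dμ = Dμ * F' := by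
    rw [← hDiag, hF']
    simp only [mul_assoc, c1, c2]
    congr 1
    rw [← mul_assoc, ← mul_assoc, hFG]
  have hNpsd : (F' * Dμ).PosSemidef := by
    have hRK : (R ⊗ₖ (1 : Matrix (Fin d') (Fin d') ℂ)).PosSemidef := by
      obtain ⟨C, hC⟩ : ∃ C : Matrix (Fin n) (Fin n) ℂ, R = Cᴴ * C := by
        open scoped MatrixOrder in exact CStarAlgebra.nonneg_iff_eq_star_mul_self.mp hRpsd.nonneg
      have e : (Cᴴ * C) ⊗ₖ (1 : Matrix (Fin d') (Fin d') ℂ) =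
          (C ⊗ₖ (1 : Matrix (Fin d') (Fin d') ℂ))ᴴ * (C ⊗ₖ (1 : Matrix (Fin d') (Fin d') ℂ)) := by
        rw [Stmt3Aux.kron_conjTranspose, conjTranspose_one, ← mul_kronecker_mul, one_mul]
      rw [hC, e]
      exact posSemidef_conjTranspose_mul_self _
    have hWD : W * Dμ = Ghat * W := by
      rw [hGspec, mul_assoc (W * Dμ), hsW, mul_one]
    have hGadj : (Ghat * W)ᴴ = star W * Ghat := by
      rw [conjTranspose_mul, hGherm, Matrix.star_eq_conjTranspose]
    have key : F' * Dμ = (Ghat * W)ᴴ * (R ⊗ₖ (1 : Matrix (Fin d') (Fin d') ℂ)) * (Ghat * W) := by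
      calc F' * Dμ = star W * F * (W * Dμ) := by rw [hF', mul_assoc]
        _ = star W * F * (Ghat * W) := by rw [hWD]
        _ = star W * (Ghat * (R ⊗ₖ (1 : Matrix (Fin d') (Fin d') ℂ))) * (Ghat * W) := by
            rw [hFdef]
        _ = (Ghat * W)ᴴ * (R ⊗ₖ (1 : Matrix (Fin d') (Fin d') ℂ)) * (Ghat * W) := by
            rw [hGadj]; simp only [mul_assoc]
    rw [key]
    exact hRK.conjTranspose_mul_mul_same _
  have hdet : ∀ i, μ i ≠ 0 := by
    have hdet0 : Ghat.det ≠ 0 := ((Matrix.isUnit_iff_isUnit_det Ghat).mp hunit).ne_zero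
    rw [hGherm.det_eq_prod_eigenvalues] at hdet0
    intro i hzero
    apply hdet0
    refine Finset.prod_eq_zero (Finset.mem_univ i) ?_
    rw [hμ] at hzero
    rw [hzero]
    simp
  have hsq2 : (F' * Dμ) ^ 2 = Dμ ^ 2 := by
    rw [pow_two, pow_two]
    calc F' * Dμ * (F' * Dμ) = F' * (Dμ * F') * Dμ := by noncomm_ring
      _ = F' * (F' * Dμ) * Dμ := by rw [← hcommD]
      _ = (F' * F') * (Dμ * Dμ) := by noncomm_ring
      _ = Dμ * Dμ := by rw [hF'2, one_mul]
  set Dabs : Matrix (Fin n × Fin d') (Fin n × Fin d') ℂ :=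
    diagonal (fun i => ((|μ i| : ℝ) : ℂ)) with hDabs
  have hDabs_psd : Dabs.PosSemidef :=
    PosSemidef.diagonal fun i => Complex.zero_le_real.2 (abs_nonneg _)
  have hDabs_sq : Dabs ^ 2 = Dμ ^ 2 := by
    rw [pow_two, pow_two, hDabs, hDμ, diagonal_mul_diagonal, diagonal_mul_diagonal]
    have he : (fun i => ((|μ i| : ℝ) : ℂ) * ((|μ i| : ℝ) : ℂ)) =
        (fun i => ((μ i : ℝ) : ℂ) * ((μ i : ℝ) : ℂ)) := funext fun i => by
      rw [← Complex.ofReal_mul, ← Complex.ofReal_mul, abs_mul_abs_self]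
    rw [he]
  have hNeq : F' * Dμ = Dabs := by
    open scoped MatrixOrder in
    exact (CFC.sq_eq_sq_iff _ _ hNpsd.nonneg hDabs_psd.nonneg).mp (hsq2.trans hDabs_sq.symm)
  have hDinv : Dμ * diagonal (fun i => ((μ i : ℂ))⁻¹) = 1 := by
    rw [hDμ, diagonal_mul_diagonal]
    have he : (fun i => ((μ i : ℝ) : ℂ) * ((μ i : ℂ))⁻¹) = fun _ => (1:ℂ) :=
      funext fun i => mul_inv_cancel₀ (by exact_mod_cast hdet i)
    rw [he, diagonal_one]
  have hF'diag : F' = diagonal (fun i => ((|μ i| : ℝ) : ℂ) * ((μ i : ℂ))⁻¹) := by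
    calc F' = F' * (Dμ * diagonal (fun i => ((μ i : ℂ))⁻¹)) := by rw [hDinv, mul_one]
      _ = (F' * Dμ) * diagonal (fun i => ((μ i : ℂ))⁻¹) := (mul_assoc F' Dμ _).symm
      _ = Dabs * diagonal (fun i => ((μ i : ℂ))⁻¹) := by rw [hNeq]
      _ = diagonal (fun i => ((|μ i| : ℝ) : ℂ) * ((μ i : ℂ))⁻¹) := by
          rw [hDabs, diagonal_mul_diagonal]
  have htrF' : Matrix.trace F' = 0 := by
    rw [hF', Matrix.trace_mul_cycle, hWs, one_mul, htrF]
  have hsum0 : ∑ i, (|μ i| * (μ i)⁻¹ : ℝ) = 0 := by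
    have h1 : Matrix.trace (diagonal (fun i => ((|μ i| : ℝ) : ℂ) * ((μ i : ℂ))⁻¹)) = 0 := by
      rw [← hF'diag, htrF']
    rw [Matrix.trace_diagonal] at h1
    have h2 : ((∑ i, (|μ i| * (μ i)⁻¹ : ℝ) : ℝ) : ℂ) = 0 := by
      rw [← h1]
      push_cast
      rfl
    exact_mod_cast h2
  have hsigns : ∀ i, (|μ i| * (μ i)⁻¹ : ℝ) = if 0 < μ i then 1 else -1 := by
    intro i
    rcases lt_trichotomy (μ i) 0 with hneg | hzero | hpos
    · rw [if_neg (by linarith), abs_of_neg hneg, neg_mul, mul_inv_cancel₀ (hdet i)]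
    · exact absurd hzero (hdet i)
    · rw [if_pos hpos, abs_of_pos hpos]
      exact mul_inv_cancel₀ (hdet i)
  rw [Finset.sum_congr rfl fun i _ => hsigns i, Finset.sum_ite, Finset.sum_const,
    Finset.sum_const] at hsum0
  have hcard : ((Finset.univ.filter fun i => 0 < μ i).card : ℝ) =
      ((Finset.univ.filter fun i => ¬ 0 < μ i).card : ℝ) := by
    simp only [nsmul_eq_mul, mul_one, mul_neg] at hsum0
    linarith
  have hfilter : (Finset.univ.filter fun i => ¬ 0 < μ i) =
      (Finset.univ.filter fun i => μ i < 0) := by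
    refine Finset.filter_congr fun i _ => ?_
    constructor
    · intro h
      exact lt_of_le_of_ne (not_lt.mp h) (hdet i)
    · intro h
      exact not_lt.mpr h.le
  rw [hfilter] at hcard
  have hcardnat : (Finset.univ.filter fun i => 0 < μ i).card =
      (Finset.univ.filter fun i => μ i < 0).card := Nat.cast_inj.mp (by exact_mod_cast hcard)
  unfold matSig
  rw [dif_pos hGherm]
  rw [← hμ]
  rw [hcardnat]
  ring
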